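/- Let D be a triangulated category and let B, C be strict full triangulated subcategories of D with Hom_D(B,C) = 0 for all B ∈ B, C ∈ C. Assume that for every object A of D there exists a distinguished triangle B → A → C → B[1] with B ∈ B and C ∈ C. Then the inclusion functor i_* : B → D admits a right adjoint i^! : D → B. -/

import Mathlib

open CategoryTheory Limits Pretriangulated

universe v u

namespace CategoryTheory.Triangulated

variable (C : Type*) [Category C] [HasZeroObject C] [HasShift C ℤ]
  [Preadditive C] [∀ (n : ℤ), (shiftFunctor C n).Additive] [Pretriangulated C]

/-- A triangulated subcategory of a pretriangulated category (the structure
`Triangulated.Subcategory` of the older Mathlib). -/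
structure Subcategory where
  /-- the underlying predicate on objects of a triangulated subcategory -/
  P : ObjectProperty C
  zero' : ∃ (Z : C) (_ : IsZero Z), P Z
  shift (X : C) (n : ℤ) : P X → P (X⟦n⟧)
  ext₂' (T : Triangle C) (_ : T ∈ distTriang C) : P T.obj₁ → P T.obj₃ → P.isoClosure T.obj₂

end CategoryTheory.Triangulated

/-- For a semiorthogonal pair `(B, C)` of strict full triangulated subcategories of a
triangulated category `D` such that every object admits a decomposition triangle
`B → A → C → B[1]`, the inclusion `i_* : B → D` admits a right adjoint. -/
theorem inclusion_left_part_isLeftAdjoint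
    {D : Type u} [Category.{v} D] [HasZeroObject D] [HasShift D ℤ] [Preadditive D]
    [∀ n : ℤ, (shiftFunctor D n).Additive] [Pretriangulated D] [IsTriangulated D]
    (B C : Triangulated.Subcategory D)
    [B.P.IsClosedUnderIsomorphisms] [C.P.IsClosedUnderIsomorphisms]
    (horth : ∀ (X Y : D), B.P X → C.P Y → ∀ f : X ⟶ Y, f = 0)
    (hdec : ∀ A : D, ∃ (X Y : D) (f : X ⟶ A) (g : A ⟶ Y) (h : Y ⟶ X⟦(1 : ℤ)⟧),
      B.P X ∧ C.P Y ∧ Triangle.mk f g h ∈ distTriang D) :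
    B.P.ι.IsLeftAdjoint := by
  have : ∀ A : D, HasTerminal (CostructuredArrow B.P.ι A) := by
    intro A
    obtain ⟨X, Y, f, g, h, hX, hY, hT⟩ := hdec A
    let X' : B.P.FullSubcategory := ⟨X, hX⟩
    let T : CostructuredArrow B.P.ι A :=
      CostructuredArrow.mk (show B.P.ι.obj X' ⟶ A from f)
    have key : ∀ Z : CostructuredArrow B.P.ι A,
        ∃ l : B.P.ι.obj Z.left ⟶ X, l ≫ f = Z.hom := by
      intro Z
      obtain ⟨l, hl⟩ := Triangle.coyoneda_exact₂ _ hT Z.hom (horth _ _ Z.left.2 hY _)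
      exact ⟨l, hl.symm⟩
    have hterm : IsTerminal T := by
      apply IsTerminal.ofUniqueHom
        (fun Z => CostructuredArrow.homMk
          (show Z.left ⟶ X' from ObjectProperty.homMk (key Z).choose) (by exact (key Z).choose_spec))
      · intro Z m
        ext
        obtain ⟨ml, hml⟩ : ∃ ml : B.P.ι.obj Z.left ⟶ X,
            B.P.ι.map m.left = ml :=
          ⟨B.P.ι.map m.left, rfl⟩
        show B.P.ι.map m.left = (key Z).choose
        rw [hml]
        have h1 : ml ≫ f = Z.hom := by
          rw [← hml]; simpa [T] using m.w
        have hsub : (ml - (key Z).choose) ≫ f = 0 := by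
          rw [Preadditive.sub_comp, h1, (key Z).choose_spec, sub_self]
        obtain ⟨k, hk⟩ := Triangle.coyoneda_exact₂ _ (inv_rot_of_distTriang _ hT)
          (X := B.P.ι.obj Z.left) (_ - _) hsub
        have hk0 : k = 0 := horth _ _ Z.left.2 (C.shift Y (-1) hY) k
        rw [hk0, zero_comp] at hk
        exact sub_eq_zero.mp hk
    exact hterm.hasTerminal
  exact isLeftAdjoint_of_costructuredArrowTerminals _
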